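/- arXiv:2105.11568 — 2 statements merged into one kernel-verified Lean document; each statement's English description precedes it below -/
import Mathlib

section
/- Let γ be the Coxeter element on weakly increasing k-tuples with entries in {0,...,n−1} as above, of order k+1. For each 1 ≤ i ≤ k, the coordinate function g_i(x) = x_i has orbit-average i(n−1)/(k+1) on every γ-orbit: for every x ∈ X, (1/(k+1)) Σ_{j=0}^{k} g_i(γ^j x) = i(n−1)/(k+1). -/
/-- The reflection `ρ_i` acting on extended tuples `(x₀, x₁, ..., x_k, x_{k+1})`. -/
def rho (k : ℕ) (i : Fin k) (x : Fin (k + 2) → ℝ) : Fin (k + 2) → ℝ :=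
  fun j =>
    if j.val = i.val + 1 then
      x ⟨i.val, by omega⟩ + x ⟨i.val + 2, by omega⟩ - x ⟨i.val + 1, by omega⟩
    else x j

/-- `gammaAux k m = ρ_m ∘ ⋯ ∘ ρ_2 ∘ ρ_1` (1-based numbering; `ρ_1` acts first). -/
def gammaAux (k : ℕ) : ℕ → (Fin (k + 2) → ℝ) → Fin (k + 2) → ℝ
  | 0 => id
  | m + 1 => if h : m < k then rho k ⟨m, h⟩ ∘ gammaAux k m else gammaAux k m

/-- The Coxeter element `γ = ρ_k ∘ ⋯ ∘ ρ_1`. -/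
def gammaMap (k : ℕ) : (Fin (k + 2) → ℝ) → Fin (k + 2) → ℝ := gammaAux k k

/-- Membership in `X`: weakly increasing tuples with `x₀ = 0`, `x_{k+1} = n - 1`. -/
def inX (n k : ℕ) (x : Fin (k + 2) → ℝ) : Prop :=
  Monotone x ∧ x 0 = 0 ∧ x (Fin.last (k + 1)) = (n : ℝ) - 1

def Eext (n k : ℕ) (x : Fin (k + 2) → ℝ) (m : ℕ) : ℝ :=
  x ⟨m % (k + 1), by have := Nat.mod_lt m (show 0 < k + 1 by omega); omega⟩
    + (m / (k + 1) : ℕ) * ((n : ℝ) - 1)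

lemma Eext_eq (n k : ℕ) (x : Fin (k + 2) → ℝ) (hx : inX n k x) (m : ℕ) (hm : m ≤ k + 1) :
    Eext n k x m = x ⟨m, by omega⟩ := by
  have h0 : x ⟨0, by omega⟩ = 0 := by
    rw [show (⟨0, by omega⟩ : Fin (k + 2)) = 0 by rfl]; exact hx.2.1
  rcases eq_or_lt_of_le hm with h | h
  · subst h
    have h1 : (k + 1) % (k + 1) = 0 := Nat.mod_self _
    have h2 : (k + 1) / (k + 1) = 1 := Nat.div_self (by omega)
    simp only [Eext, h1, h2]
    have hl : x ⟨k + 1, by omega⟩ = (n : ℝ) - 1 := by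
      rw [show (⟨k + 1, by omega⟩ : Fin (k + 2)) = Fin.last (k + 1) by rfl]; exact hx.2.2
    rw [h0, hl]; push_cast; ring
  · have h1 : m % (k + 1) = m := Nat.mod_eq_of_lt (by omega)
    have h2 : m / (k + 1) = 0 := Nat.div_eq_of_lt (by omega)
    simp [Eext, h1, h2]

lemma Eext_add (n k : ℕ) (x : Fin (k + 2) → ℝ) (m : ℕ) :
    Eext n k x (m + (k + 1)) = Eext n k x m + ((n : ℝ) - 1) := by
  have h1 : (m + (k + 1)) % (k + 1) = m % (k + 1) := Nat.add_mod_right m (k + 1)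
  have h2 : (m + (k + 1)) / (k + 1) = m / (k + 1) + 1 := Nat.add_div_right _ (by omega)
  simp only [Eext, h1, h2]
  push_cast; ring

lemma gammaAux_apply (k : ℕ) (m : ℕ) (hm : m ≤ k) (y : Fin (k + 2) → ℝ) :
    ∀ j : Fin (k + 2), gammaAux k m y j =
      if h : 1 ≤ j.val ∧ j.val ≤ m then y 0 + y ⟨j.val + 1, by omega⟩ - y 1 else y j := by
  induction m with
  | zero =>
    intro j
    simp only [gammaAux, id]
    rw [dif_neg (by omega)]
  | succ m ih =>
    intro j
    obtain ⟨jv, hjv⟩ := j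
    have hmk : m < k := by omega
    have ih' := ih (by omega)
    simp only [gammaAux, dif_pos hmk, Function.comp_apply, rho, Fin.val_mk]
    by_cases hj : jv = m + 1
    · subst hj
      rw [if_pos rfl, ih', ih', ih']
      simp only [Fin.val_mk]
      rw [dif_neg (show ¬(1 ≤ m + 2 ∧ m + 2 ≤ m) by omega),
        dif_neg (show ¬(1 ≤ m + 1 ∧ m + 1 ≤ m) by omega),
        dif_pos (show 1 ≤ m + 1 ∧ m + 1 ≤ m + 1 by omega)]
      by_cases hm0 : m = 0
      · subst hm0
        rw [dif_neg (by omega)]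
        have e1 : (⟨(0 : ℕ), by omega⟩ : Fin (k + 2)) = 0 := rfl
        have e2 : (⟨(1 : ℕ), by omega⟩ : Fin (k + 2)) = 1 := rfl
        rw [e1]
        ring_nf
        rfl
      · rw [dif_pos (show 1 ≤ m ∧ m ≤ m by omega)]
        ring_nf
    · rw [if_neg hj, ih']
      simp only [Fin.val_mk]
      by_cases hc : 1 ≤ jv ∧ jv ≤ m
      · rw [dif_pos hc, dif_pos (show 1 ≤ jv ∧ jv ≤ m + 1 by omega)]
      · rw [dif_neg hc, dif_neg (by omega)]

lemma gamma_iterate (n k : ℕ) (hk : 2 ≤ k) (x : Fin (k + 2) → ℝ) (hx : inX n k x) :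
    ∀ j : ℕ, ∀ m : ℕ, ∀ hm : m ≤ k + 1,
      (gammaMap k)^[j] x ⟨m, by omega⟩ = Eext n k x (m + j) - Eext n k x j := by
  intro j
  induction j with
  | zero =>
    intro m hm
    simp only [Function.iterate_zero, id, Nat.add_zero]
    rw [Eext_eq n k x hx m hm, Eext_eq n k x hx 0 (by omega)]
    rw [show (⟨0, by omega⟩ : Fin (k + 2)) = 0 by rfl, hx.2.1]
    simp
  | succ j ih =>
    intro m hm
    rw [Function.iterate_succ_apply']
    simp only [gammaMap] at ih ⊢
    rw [gammaAux_apply k k le_rfl _ ⟨m, by omega⟩]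
    simp only [Fin.val_mk]
    by_cases hc : 1 ≤ m ∧ m ≤ k
    · rw [dif_pos hc]
      rw [show (0 : Fin (k + 2)) = ⟨0, by omega⟩ by rfl,
          show (1 : Fin (k + 2)) = ⟨1, by omega⟩ by rfl]
      rw [ih 0 (by omega), ih (m + 1) (by omega), ih 1 (by omega)]
      have : m + 1 + j = m + (j + 1) := by omega
      rw [this]
      have : 1 + j = j + 1 := by omega
      rw [this]
      ring
    · rw [dif_neg hc]
      rcases Nat.lt_or_ge m 1 with h1 | h1
      · have hm0 : m = 0 := by omega
        subst hm0
        rw [ih 0 (by omega)]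
        simp
      · have hm1 : m = k + 1 := by omega
        subst hm1
        rw [ih (k + 1) (by omega)]
        have e1 : k + 1 + j = j + (k + 1) := by omega
        have e2 : k + 1 + (j + 1) = (j + 1) + (k + 1) := by omega
        rw [e1, e2, Eext_add, Eext_add]
        ring

theorem stmt_11 (n k : ℕ) (hn : 2 ≤ n) (hk : 2 ≤ k)
    (x : Fin (k + 2) → ℝ) (hx : inX n k x) (i : Fin k) :
    (1 / ((k : ℝ) + 1)) *
        ∑ j ∈ Finset.range (k + 1), (gammaMap k)^[j] x ⟨i.val + 1, by omega⟩ =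
      ((i.val : ℝ) + 1) * ((n : ℝ) - 1) / ((k : ℝ) + 1) := by
  set m := i.val + 1 with hm
  have hmle : m ≤ k + 1 := by omega
  have hsum : ∀ j ∈ Finset.range (k + 1),
      (gammaMap k)^[j] x ⟨m, by omega⟩ = Eext n k x (m + j) - Eext n k x j := by
    intro j _
    exact gamma_iterate n k hk x hx j m hmle
  rw [Finset.sum_congr rfl hsum, Finset.sum_sub_distrib]
  -- shift lemma
  have key : ∀ t : ℕ, ∑ j ∈ Finset.range (k + 1), Eext n k x (t + j)
      = (∑ j ∈ Finset.range (k + 1), Eext n k x j) + t * ((n : ℝ) - 1) := by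
    intro t
    induction t with
    | zero => simp
    | succ t ih =>
      have h1 : ∑ j ∈ Finset.range (k + 1), Eext n k x (t + j)
          = (∑ j ∈ Finset.range k, Eext n k x (t + (j + 1))) + Eext n k x (t + 0) :=
        Finset.sum_range_succ' _ k
      have h2 : ∑ j ∈ Finset.range (k + 1), Eext n k x (t + 1 + j)
          = (∑ j ∈ Finset.range k, Eext n k x (t + 1 + j)) + Eext n k x (t + 1 + k) :=
        Finset.sum_range_succ _ k
      have h3 : ∀ j, t + 1 + j = t + (j + 1) := by omega
      have h4 : t + 1 + k = t + (k + 1) := by omega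
      rw [h2, h4, Eext_add]
      simp only [h3]
      have h5 : (∑ j ∈ Finset.range k, Eext n k x (t + (j + 1)))
          = ∑ j ∈ Finset.range (k + 1), Eext n k x (t + j) - Eext n k x (t + 0) := by
        rw [h1]; ring
      rw [h5, ih]
      push_cast
      simp only [Nat.add_zero]
      ring
  rw [key m]
  have hk1 : ((k : ℝ) + 1) ≠ 0 := by positivity
  rw [hm]
  push_cast
  field_simp
  ring
end

section
/- Let X be the set of k-element multisets with elements in {0,1} and T : X → X the map swapping 0 ↔ 1 in every element. Let V be the span of all functions g_i ∘ T^j (1 ≤ i ≤ k, j ∈ {0,1}) where g_i(x) is the i-th smallest element, and let U : V → V be given by Uf = f ∘ T. Then the multiplicity of the eigenvalue 1 of U is ⌈(k+1)/2⌉ and the multiplicity of the eigenvalue −1 is ⌊(k+1)/2⌋. -/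
/-- `X` is the set of `k`-element multisets with elements in `{0,1}`. -/
abbrev XX (k : ℕ) := {x : Multiset (Fin 2) // Multiset.card x = k}

/-- `T` swaps `0 ↔ 1` in every element (i.e. adds 1 mod 2 to each element). -/
def Tk (k : ℕ) (x : XX k) : XX k :=
  ⟨x.1.map (· + 1), by simp [x.2]⟩

/-- `gst k i x` is the `i`-th smallest element of `x` (1-based), as a real number. -/
def gst (k : ℕ) (i : ℕ) (x : XX k) : ℝ :=
  ((((x.1.sort (· ≤ ·)).getD (i - 1) 0 : Fin 2) : ℕ) : ℝ)

/-- The time-evolution operator `U f = f ∘ T` on the space of all functions `X → ℝ`. -/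
def Ubig (k : ℕ) : Module.End ℝ (XX k → ℝ) where
  toFun f := f ∘ Tk k
  map_add' := by intros; rfl
  map_smul' := by intros; rfl

/-- `V` is the span of the functions `g_i ∘ T^j` for `1 ≤ i ≤ k`, `j ∈ {0,1}`. -/
def Vspan (k : ℕ) : Submodule ℝ (XX k → ℝ) :=
  Submodule.span ℝ
    {f | ∃ i : Fin k, ∃ j : Fin 2, f = fun x => gst k (i.val + 1) ((Tk k)^[j.val] x)}

/- ---------------------- Auxiliary development ---------------------- -/

instance (k : ℕ) : Fintype (XX k) := inferInstanceAs (Fintype (Sym (Fin 2) k))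

lemma multiset_classify (s : Multiset (Fin 2)) :
    s = Multiset.replicate (Multiset.count 0 s) 0 + Multiset.replicate (Multiset.count 1 s) 1 := by
  induction s using Multiset.induction_on with
  | empty => simp
  | cons a s ih =>
    fin_cases a <;>
      simp [Multiset.count_cons, Multiset.replicate_succ, Multiset.cons_add] <;>
      rw [ih] <;> simp [Multiset.add_cons, Multiset.cons_add, Multiset.count_replicate]

/-- the number of `1`s in `x` -/
def cnt (k : ℕ) (x : XX k) : ℕ := Multiset.count 1 x.1

lemma cnt_le {k : ℕ} (x : XX k) : cnt k x ≤ k := by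
  have h := Multiset.count_le_card 1 x.1
  rw [x.2] at h; exact h

lemma count_sum {k : ℕ} (x : XX k) : Multiset.count 0 x.1 + Multiset.count 1 x.1 = k := by
  have h := congrArg Multiset.card (multiset_classify x.1)
  rw [x.2] at h
  simpa using h.symm

lemma count_zero_eq {k : ℕ} (x : XX k) : Multiset.count 0 x.1 = k - cnt k x := by
  have := count_sum x; unfold cnt; omega

/-- the element of `XX k` with exactly `j` ones -/
def EE (k j : ℕ) (hj : j ≤ k) : XX k :=
  ⟨Multiset.replicate (k - j) 0 + Multiset.replicate j 1, by simp; omega⟩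

lemma cnt_EE {k j : ℕ} (hj : j ≤ k) : cnt k (EE k j hj) = j := by
  simp [cnt, EE, Multiset.count_replicate]

lemma eq_EE {k : ℕ} (x : XX k) : x = EE k (cnt k x) (cnt_le x) := by
  apply Subtype.ext
  conv_lhs => rw [multiset_classify x.1]
  rw [count_zero_eq]
  rfl

lemma EE_congr {k j j' : ℕ} (hj : j ≤ k) (hj' : j' ≤ k) (h : j = j') :
    EE k j hj = EE k j' hj' := by subst h; rfl

lemma Tk_EE {k j : ℕ} (hj : j ≤ k) : Tk k (EE k j hj) = EE k (k - j) (Nat.sub_le k j) := by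
  apply Subtype.ext
  show Multiset.map _ ((EE k j hj).1) = _
  simp only [EE, Multiset.map_add, Multiset.map_replicate]
  have h0 : (0 : Fin 2) + 1 = 1 := by decide
  have h1 : (1 : Fin 2) + 1 = 0 := by decide
  rw [h0, h1, Nat.sub_sub_self hj, add_comm]

lemma cnt_Tk {k : ℕ} (x : XX k) : cnt k (Tk k x) = k - cnt k x := by
  conv_lhs => rw [eq_EE x, Tk_EE, cnt_EE]

lemma getD_rep {α : Type*} (a d : α) {m n : ℕ} (h : m < n) :
    (List.replicate n a).getD m d = a := by
  rw [List.getD_eq_getElem _ _ (by simpa using h)]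
  exact List.getElem_replicate ..

lemma sort_EE {k j : ℕ} (hj : j ≤ k) :
    (EE k j hj).1.sort (· ≤ ·) = List.replicate (k - j) 0 ++ List.replicate j 1 := by
  refine List.Perm.eq_of_pairwise' (Multiset.pairwise_sort _ _) ?_ (Multiset.coe_eq_coe.mp ?_)
  rotate_left
  · rw [Multiset.sort_eq]; rfl
  · simp only [List.pairwise_append, List.pairwise_replicate, List.mem_replicate]
    refine ⟨by simp, by simp, ?_⟩
    rintro a ⟨-, rfl⟩ b ⟨-, rfl⟩
    decide

lemma gst_EE {k i j : ℕ} (hi1 : 1 ≤ i) (hik : i ≤ k) (hj : j ≤ k) :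
    gst k i (EE k j hj) = if k - j ≤ i - 1 then 1 else 0 := by
  rw [gst, sort_EE]
  by_cases h : i - 1 < k - j
  · rw [List.getD_append _ _ _ _ (by simpa using h), getD_rep _ _ h]
    simp [Nat.not_le.mpr h]
  · have hji : 1 ≤ j := by omega
    rw [List.getD_append_right _ _ _ _ (by simpa using h), getD_rep _ _ (by simp; omega)]
    simp only [Fin.isValue, Fin.val_one, Nat.cast_one, if_pos (Nat.le_of_not_lt h)]

lemma fin_mk_eq {n a b : ℕ} (ha : a < n) (hb : b < n) (h : a = b) :
    (⟨a, ha⟩ : Fin n) = ⟨b, hb⟩ := by subst h; rfl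

lemma gst_apply {k i : ℕ} (hi1 : 1 ≤ i) (hik : i ≤ k) (x : XX k) :
    gst k i x = if k - cnt k x ≤ i - 1 then 1 else 0 := by
  conv_lhs => rw [eq_EE x]
  exact gst_EE hi1 hik (cnt_le x)

/-- indicator of `cnt = j` -/
def dd (k j : ℕ) : XX k → ℝ := fun x => if cnt k x = j then 1 else 0

lemma dd_mem {k : ℕ} (hk : 1 ≤ k) {j : ℕ} (hj : j ≤ k) : dd k j ∈ Vspan k := by
  rcases Nat.eq_zero_or_pos j with rfl | hj0
  · -- dd k 0 = gst k 1 ∘ Tk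
    have key : dd k 0 = fun x => gst k (0 + 1) ((Tk k)^[1] x) := by
      funext x
      have hc := cnt_le x
      rw [dd]
      simp only [Function.iterate_one]
      rw [gst_apply le_rfl hk (Tk k x), cnt_Tk]
      by_cases h : cnt k x = 0
      · rw [if_pos h, if_pos (by omega)]
      · rw [if_neg h, if_neg (by omega)]
    rw [key]
    exact Submodule.subset_span ⟨⟨0, by omega⟩, ⟨1, by omega⟩, rfl⟩
  · by_cases hjk : j = k
    · -- dd k k = gst k 1
      have key : dd k j = fun x => gst k (0 + 1) ((Tk k)^[0] x) := by
        funext x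
        have hc := cnt_le x
        rw [dd]
        simp only [Function.iterate_zero, id]
        rw [gst_apply le_rfl hk x]
        by_cases h : cnt k x = j
        · rw [if_pos h, if_pos (by omega)]
        · rw [if_neg h, if_neg (by omega)]
      rw [key]
      exact Submodule.subset_span ⟨⟨0, by omega⟩, ⟨0, by omega⟩, rfl⟩
    · -- 0 < j < k
      have hjk' : j < k := lt_of_le_of_ne hj hjk
      have h1 : (fun x => gst k ((k - j - 1) + 1) ((Tk k)^[(0 : Fin 2).val] x)) ∈ Vspan k :=
        Submodule.subset_span ⟨⟨k - j - 1, by omega⟩, 0, rfl⟩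
      have h2 : (fun x => gst k ((k - j) + 1) ((Tk k)^[(0 : Fin 2).val] x)) ∈ Vspan k :=
        Submodule.subset_span ⟨⟨k - j, by omega⟩, 0, rfl⟩
      have key : dd k j = (fun x => gst k ((k - j) + 1) ((Tk k)^[(0 : Fin 2).val] x))
          - (fun x => gst k ((k - j - 1) + 1) ((Tk k)^[(0 : Fin 2).val] x)) := by
        funext x
        have hc := cnt_le x
        simp only [Pi.sub_apply, Function.iterate_zero, id, Fin.val_zero, dd]
        rw [gst_apply (by omega) (by omega) x, gst_apply (by omega) (by omega) x]
        by_cases h : cnt k x = j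
        · rw [if_pos h, if_pos (by omega), if_neg (by omega)]; norm_num
        · rw [if_neg h]
          by_cases h2 : cnt k x < j
          · rw [if_neg (by omega), if_neg (by omega)]; norm_num
          · rw [if_pos (by omega), if_pos (by omega)]; norm_num
      rw [key]
      exact Submodule.sub_mem _ h2 h1

lemma single_mem {k : ℕ} (hk : 1 ≤ k) (x : XX k) : Pi.single x (1 : ℝ) ∈ Vspan k := by
  classical
  have hx : Pi.single x (1 : ℝ) = dd k (cnt k x) := by
    funext y
    rw [Pi.single_apply, dd]
    by_cases h : cnt k y = cnt k x
    · rw [if_pos h, if_pos]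
      rw [eq_EE y, eq_EE x]
      exact EE_congr _ _ h
    · rw [if_neg h, if_neg (fun hyx => h (by rw [hyx]))]
  rw [hx]
  exact dd_mem hk (cnt_le x)

lemma Vspan_top {k : ℕ} (hk : 1 ≤ k) : Vspan k = ⊤ := by
  classical
  rw [eq_top_iff]
  intro f _
  have hf : f = ∑ x : XX k, f x • (Pi.single x (1 : ℝ) : XX k → ℝ) := by
    funext y
    rw [Finset.sum_apply]
    simp [Pi.single_apply, eq_comm]
  rw [hf]
  exact Submodule.sum_mem _ fun x _ => Submodule.smul_mem _ _ (single_mem hk x)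

/- ---------------------- Eigenspace dimensions ---------------------- -/

lemma mem_eigen_one_iff {k : ℕ} (f : XX k → ℝ) :
    f ∈ Module.End.eigenspace (Ubig k) 1 ↔ ∀ x, f (Tk k x) = f x := by
  rw [Module.End.mem_eigenspace_iff]
  constructor
  · intro h x
    have := congrFun h x
    simpa [Ubig] using this
  · intro h
    funext x
    simpa [Ubig] using h x

lemma mem_eigen_negone_iff {k : ℕ} (f : XX k → ℝ) :
    f ∈ Module.End.eigenspace (Ubig k) (-1) ↔ ∀ x, f (Tk k x) = -f x := by
  rw [Module.End.mem_eigenspace_iff]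
  constructor
  · intro h x
    have := congrFun h x
    simpa [Ubig] using this
  · intro h
    funext x
    simpa [Ubig] using h x

/-- restriction map on the `+1` eigenspace -/
noncomputable def phi1 (k : ℕ) : ↥(Module.End.eigenspace (Ubig k) 1) →ₗ[ℝ] (Fin ((k + 2) / 2) → ℝ) where
  toFun f := fun i => f.1 (EE k i.1 (by have := i.2; omega))
  map_add' := by intros; rfl
  map_smul' := by intros; rfl

/-- extension map to the `+1` eigenspace -/
noncomputable def psi1 (k : ℕ) : (Fin ((k + 2) / 2) → ℝ) →ₗ[ℝ] ↥(Module.End.eigenspace (Ubig k) 1) where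
  toFun g :=
    ⟨fun x => g ⟨min (cnt k x) (k - cnt k x), by have := cnt_le x; omega⟩, by
      rw [mem_eigen_one_iff]
      intro x
      have hc := cnt_le x
      simp only [cnt_Tk]
      congr 1
      exact fin_mk_eq _ _ (by omega)⟩
  map_add' := by intros; rfl
  map_smul' := by intros; rfl

lemma finrank_eigen_one (k : ℕ) :
    Module.finrank ℝ ↥(Module.End.eigenspace (Ubig k) 1) = (k + 2) / 2 := by
  have e : ↥(Module.End.eigenspace (Ubig k) 1) ≃ₗ[ℝ] (Fin ((k + 2) / 2) → ℝ) := by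
    refine LinearEquiv.ofLinear (phi1 k) (psi1 k) ?_ ?_
    · apply LinearMap.ext
      intro g
      funext i
      show g ⟨min (cnt k (EE k i.1 _)) _, _⟩ = g i
      simp only [cnt_EE]
      have := i.2
      congr 1
      exact Fin.ext (show min i.1 (k - i.1) = i.1 by omega)
    · apply LinearMap.ext
      intro f
      apply Subtype.ext
      funext x
      show f.1 (EE k (min (cnt k x) (k - cnt k x)) _) = f.1 x
      have hc := cnt_le x
      have hfix := (mem_eigen_one_iff f.1).mp f.2
      by_cases h : cnt k x ≤ k - cnt k x
      · rw [EE_congr _ (cnt_le x) (min_eq_left h), ← eq_EE x]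
      · rw [EE_congr _ (Nat.sub_le k _) (min_eq_right (le_of_not_ge h))]
        have hTx : Tk k x = EE k (k - cnt k x) (Nat.sub_le k _) := by
          rw [eq_EE (Tk k x)]
          exact EE_congr _ _ (cnt_Tk x)
        rw [← hTx, hfix x]
  rw [e.finrank_eq, Module.finrank_fin_fun]

/-- restriction map on the `-1` eigenspace -/
noncomputable def phi2 (k : ℕ) : ↥(Module.End.eigenspace (Ubig k) (-1)) →ₗ[ℝ] (Fin ((k + 1) / 2) → ℝ) where
  toFun f := fun i => f.1 (EE k i.1 (by have := i.2; omega))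
  map_add' := by intros; rfl
  map_smul' := by intros; rfl

/-- the function extending `g` antisymmetrically -/
noncomputable def psi2fun (k : ℕ) (g : Fin ((k + 1) / 2) → ℝ) (x : XX k) : ℝ :=
  if h : 2 * cnt k x < k then g ⟨cnt k x, by omega⟩
  else if h2 : 2 * cnt k x = k then 0
  else -g ⟨k - cnt k x, by have := cnt_le x; omega⟩

lemma psi2fun_mem (k : ℕ) (g : Fin ((k + 1) / 2) → ℝ) :
    psi2fun k g ∈ Module.End.eigenspace (Ubig k) (-1) := by
  rw [mem_eigen_negone_iff]
  intro x
  have hc := cnt_le x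
  have hcT := cnt_Tk x
  unfold psi2fun
  simp only [cnt_Tk]
  by_cases h1 : 2 * cnt k x < k
  · rw [dif_neg (by omega), dif_neg (by omega), dif_pos h1]
    congr 2
    exact fin_mk_eq _ _ (by omega)
  · by_cases h2 : 2 * cnt k x = k
    · rw [dif_neg (by omega), dif_pos (by omega), dif_neg h1, dif_pos h2]
      simp
    · rw [dif_pos (by omega), dif_neg h1, dif_neg h2, neg_neg]

/-- extension map to the `-1` eigenspace -/
noncomputable def psi2 (k : ℕ) : (Fin ((k + 1) / 2) → ℝ) →ₗ[ℝ] ↥(Module.End.eigenspace (Ubig k) (-1)) where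
  toFun g := ⟨psi2fun k g, psi2fun_mem k g⟩
  map_add' := by
    intro g h
    apply Subtype.ext
    funext x
    show psi2fun k (g + h) x = psi2fun k g x + psi2fun k h x
    unfold psi2fun
    split_ifs <;> simp <;> ring
  map_smul' := by
    intro c g
    apply Subtype.ext
    funext x
    show psi2fun k (c • g) x = c * psi2fun k g x
    unfold psi2fun
    split_ifs <;> simp

lemma finrank_eigen_negone (k : ℕ) :
    Module.finrank ℝ ↥(Module.End.eigenspace (Ubig k) (-1)) = (k + 1) / 2 := by
  have e : ↥(Module.End.eigenspace (Ubig k) (-1)) ≃ₗ[ℝ] (Fin ((k + 1) / 2) → ℝ) := by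
    refine LinearEquiv.ofLinear (phi2 k) (psi2 k) ?_ ?_
    · apply LinearMap.ext
      intro g
      funext i
      have hi := i.2
      show psi2fun k g (EE k i.1 _) = g i
      unfold psi2fun
      simp only [cnt_EE]
      rw [dif_pos (by omega)]
    · apply LinearMap.ext
      intro f
      apply Subtype.ext
      funext x
      have hc := cnt_le x
      have hanti := (mem_eigen_negone_iff f.1).mp f.2
      show psi2fun k _ x = f.1 x
      unfold psi2fun
      have hTx : Tk k x = EE k (k - cnt k x) (Nat.sub_le k _) := by
        rw [eq_EE (Tk k x)]
        exact EE_congr _ _ (cnt_Tk x)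
      by_cases h1 : 2 * cnt k x < k
      · rw [dif_pos h1]
        show f.1 (EE k (cnt k x) _) = f.1 x
        rw [← eq_EE x]
      · by_cases h2 : 2 * cnt k x = k
        · rw [dif_neg h1, dif_pos h2]
          have hfixed : Tk k x = x := by
            rw [hTx]
            conv_rhs => rw [eq_EE x]
            exact EE_congr _ _ (by omega)
          have := hanti x
          rw [hfixed] at this
          linarith
        · rw [dif_neg h1, dif_neg h2]
          show -f.1 (EE k (k - cnt k x) _) = f.1 x
          rw [← hTx, hanti x, neg_neg]
  rw [e.finrank_eq, Module.finrank_fin_fun]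

theorem stmt_13 (k : ℕ) (hk : 2 ≤ k) :
    Module.finrank ℝ ↥(Vspan k ⊓ Module.End.eigenspace (Ubig k) 1) = (k + 2) / 2 ∧
      Module.finrank ℝ ↥(Vspan k ⊓ Module.End.eigenspace (Ubig k) (-1)) = (k + 1) / 2 := by
  rw [Vspan_top (by omega), top_inf_eq, top_inf_eq]
  exact ⟨finrank_eigen_one k, finrank_eigen_negone k⟩
end
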